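/- arXiv:0806.0966 — 2 statements merged into one kernel-verified Lean document; each statement's English description precedes it below -/
import Mathlib

section
/- In the discrete Heisenberg group H₃ with word metric d from S = {a,b,a⁻¹,b⁻¹}, for every group element g = c^z b^y a^x one has d(e, g) ≥ |x| + |y|, with equality when zyx ≥ 0, max(x²,y²) ≥ |z| and |xy| ≥ |z|. -/
/-- The discrete Heisenberg group `H₃`: `⟨x, y, z⟩` encodes the 3×3 upper unitriangular
integer matrix `(1 x z; 0 1 y; 0 0 1)`, with matrix multiplication. -/
@[ext] structure Heis where
  x : ℤ
  y : ℤ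
  z : ℤ

namespace Heis

instance : Mul Heis := ⟨fun p q => ⟨p.x + q.x, p.y + q.y, p.z + q.z + p.x * q.y⟩⟩
instance : One Heis := ⟨⟨0, 0, 0⟩⟩
instance : Inv Heis := ⟨fun p => ⟨-p.x, -p.y, p.x * p.y - p.z⟩⟩

theorem mul_def (p q : Heis) :
    p * q = ⟨p.x + q.x, p.y + q.y, p.z + q.z + p.x * q.y⟩ := rfl
theorem one_def : (1 : Heis) = ⟨0, 0, 0⟩ := rfl
theorem inv_def (p : Heis) : p⁻¹ = ⟨-p.x, -p.y, p.x * p.y - p.z⟩ := rfl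

instance : Group Heis where
  mul_assoc p q r := by
    simp only [mul_def, mk.injEq]
    refine ⟨by ring, by ring, by ring⟩
  one_mul p := by
    obtain ⟨px, py, pz⟩ := p
    simp only [one_def, mul_def, mk.injEq]
    refine ⟨by ring, by ring, by ring⟩
  mul_one p := by
    obtain ⟨px, py, pz⟩ := p
    simp only [one_def, mul_def, mk.injEq]
    refine ⟨by ring, by ring, by ring⟩
  inv_mul_cancel p := by
    obtain ⟨px, py, pz⟩ := p
    simp only [inv_def, mul_def, one_def, mk.injEq]
    refine ⟨by ring, by ring, by ring⟩

/-- The generator `a` (the elementary matrix with a `1` in position (1,2)). -/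
def a : Heis := ⟨1, 0, 0⟩
/-- The generator `b` (the elementary matrix with a `1` in position (2,3)). -/
def b : Heis := ⟨0, 1, 0⟩
/-- The commutator `c = [a,b] = a⁻¹b⁻¹ab` (the elementary matrix with a `1` in (1,3)). -/
def c : Heis := ⟨0, 0, 1⟩

/-- The standard generating set `S = {a, b, a⁻¹, b⁻¹}`. -/
def S : Set Heis := {a, b, a⁻¹, b⁻¹}

/-- The word metric for the generating set `S`: the length of the shortest word with
letters in `S` leading from `g` to `h` in the Cayley graph. -/
noncomputable def wdist (g h : Heis) : ℕ :=
  sInf {n | ∃ l : List Heis, (∀ s ∈ l, s ∈ S) ∧ l.length = n ∧ g * l.prod = h}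


end Heis

namespace Heis

lemma a_inv : a⁻¹ = ⟨-1, 0, 0⟩ := by simp [inv_def, a]
lemma b_inv : b⁻¹ = ⟨0, -1, 0⟩ := by simp [inv_def, b]
lemma c_inv : c⁻¹ = ⟨0, 0, -1⟩ := by simp [inv_def, c]

lemma zpow_a (n : ℤ) : a ^ n = ⟨n, 0, 0⟩ := by
  induction n using Int.induction_on with
  | zero => rfl
  | succ k ih => rw [zpow_add_one, ih]; simp [mul_def, a]
  | pred k ih => rw [zpow_sub_one, ih, a_inv]; simp [mul_def]; ring

lemma zpow_b (n : ℤ) : b ^ n = ⟨0, n, 0⟩ := by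
  induction n using Int.induction_on with
  | zero => rfl
  | succ k ih => rw [zpow_add_one, ih]; simp [mul_def, b]
  | pred k ih => rw [zpow_sub_one, ih, b_inv]; simp [mul_def]; ring

lemma zpow_c (n : ℤ) : c ^ n = ⟨0, 0, n⟩ := by
  induction n using Int.induction_on with
  | zero => rfl
  | succ k ih => rw [zpow_add_one, ih]; simp [mul_def, c]
  | pred k ih => rw [zpow_sub_one, ih, c_inv]; simp [mul_def]; ring

lemma target_eq (x y z : ℤ) : c ^ z * b ^ y * a ^ x = ⟨x, y, z⟩ := by
  rw [zpow_a, zpow_b, zpow_c]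
  simp [mul_def]

/-- word representing `a^n` -/
def wa (n : ℤ) : List Heis := List.replicate n.natAbs (if 0 ≤ n then a else a⁻¹)
/-- word representing `b^n` -/
def wb (n : ℤ) : List Heis := List.replicate n.natAbs (if 0 ≤ n then b else b⁻¹)
/-- word representing `c^n` -/
def wc (n : ℤ) : List Heis :=
  (List.replicate n.natAbs (if 0 ≤ n then [a⁻¹, b⁻¹, a, b] else [b⁻¹, a⁻¹, b, a])).flatten

lemma wa_mem {n : ℤ} : ∀ s ∈ wa n, s ∈ S := by
  intro s hs
  rw [wa, List.mem_replicate] at hs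
  rcases hs with ⟨-, rfl⟩
  split <;> simp [S]

lemma wb_mem {n : ℤ} : ∀ s ∈ wb n, s ∈ S := by
  intro s hs
  rw [wb, List.mem_replicate] at hs
  rcases hs with ⟨-, rfl⟩
  split <;> simp [S]

lemma wc_mem {n : ℤ} : ∀ s ∈ wc n, s ∈ S := by
  intro s hs
  rw [wc, List.mem_flatten] at hs
  obtain ⟨l, hl, hsl⟩ := hs
  rw [List.mem_replicate] at hl
  rcases hl with ⟨-, rfl⟩
  split at hsl <;> simp at hsl <;>
    rcases hsl with rfl | rfl | rfl | rfl <;> simp [S]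

lemma prod_wa (n : ℤ) : (wa n).prod = ⟨n, 0, 0⟩ := by
  rw [wa]
  rcases le_or_gt 0 n with h | h
  · rw [if_pos h, List.prod_replicate]
    rw [← zpow_natCast, zpow_a, Int.natAbs_of_nonneg h]
  · rw [if_neg (not_le.mpr h), List.prod_replicate]
    have : (a⁻¹ : Heis) ^ n.natAbs = a ^ (-(n.natAbs : ℤ)) := by
      rw [zpow_neg, zpow_natCast]; exact inv_pow _ _
    rw [this, zpow_a]
    congr 1
    omega

lemma prod_wb (n : ℤ) : (wb n).prod = ⟨0, n, 0⟩ := by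
  rw [wb]
  rcases le_or_gt 0 n with h | h
  · rw [if_pos h, List.prod_replicate]
    rw [← zpow_natCast, zpow_b, Int.natAbs_of_nonneg h]
  · rw [if_neg (not_le.mpr h), List.prod_replicate]
    have : (b⁻¹ : Heis) ^ n.natAbs = b ^ (-(n.natAbs : ℤ)) := by
      rw [zpow_neg, zpow_natCast]; exact inv_pow _ _
    rw [this, zpow_b]
    congr 1
    omega

lemma prod_c_word : ([a⁻¹, b⁻¹, a, b] : List Heis).prod = c := by
  simp [List.prod_cons, inv_def, mul_def, a, b, c]

lemma prod_c_inv_word : ([b⁻¹, a⁻¹, b, a] : List Heis).prod = c⁻¹ := by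
  simp [List.prod_cons, inv_def, mul_def, a, b, c]

lemma prod_wc (n : ℤ) : (wc n).prod = ⟨0, 0, n⟩ := by
  rw [wc, List.prod_flatten, List.map_replicate, List.prod_replicate]
  rcases le_or_gt 0 n with h | h
  · rw [if_pos h, prod_c_word]
    rw [← zpow_natCast, zpow_c, Int.natAbs_of_nonneg h]
  · rw [if_neg (not_le.mpr h), prod_c_inv_word]
    have : (c⁻¹ : Heis) ^ n.natAbs = c ^ (-(n.natAbs : ℤ)) := by
      rw [zpow_neg, zpow_natCast]; exact inv_pow _ _
    rw [this, zpow_c]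
    congr 1
    omega

lemma exists_word (g : Heis) : ∃ l : List Heis, (∀ s ∈ l, s ∈ S) ∧ l.prod = g := by
  obtain ⟨gx, gy, gz⟩ := g
  refine ⟨wc gz ++ wb gy ++ wa gx, ?_, ?_⟩
  · intro s hs
    simp only [List.mem_append] at hs
    rcases hs with (hs | hs) | hs
    · exact wc_mem s hs
    · exact wb_mem s hs
    · exact wa_mem s hs
  · rw [List.prod_append, List.prod_append, prod_wc, prod_wb, prod_wa]
    simp [mul_def]

/-- Abelianization lower bound: any word of length `n` can move the abelianized
coordinates by at most `n`. -/
lemma abs_prod_le : ∀ l : List Heis, (∀ s ∈ l, s ∈ S) →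
    |l.prod.x| + |l.prod.y| ≤ (l.length : ℤ)
  | [], _ => by simp [List.prod_nil, one_def]
  | s :: t, h => by
    have hs : s ∈ S := h s (by simp)
    have ht := abs_prod_le t (fun g hg => h g (by simp [hg]))
    have h1 : |s.x| + |s.y| = 1 := by
      rcases hs with rfl | rfl | rfl | rfl
      · simp [a]
      · simp [b]
      · rw [a_inv]; simp
      · rw [b_inv]; simp
    have hx : ((s :: t).prod).x = s.x + t.prod.x := rfl
    have hy : ((s :: t).prod).y = s.y + t.prod.y := rfl
    rw [hx, hy]
    have h2 := abs_add_le s.x t.prod.x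
    have h3 := abs_add_le s.y t.prod.y
    simp only [List.length_cons]
    push_cast
    linarith

lemma nat_decomp (X Y K : ℕ) (h : K ≤ X * Y) :
    ∃ M R Q V W : ℕ, R + V = X ∧ M + Q + W = Y ∧ R * Q + X * W = K := by
  rcases Nat.eq_zero_or_pos X with hX | hX
  · subst hX
    simp only [Nat.zero_mul, Nat.le_zero] at h
    exact ⟨Y, 0, 0, 0, 0, by omega, by omega, by simp [h]⟩
  · have hmod := Nat.mod_add_div K X
    have hmodlt : K % X < X := Nat.mod_lt _ hX
    have hdivle : K / X ≤ Y := by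
      have h1 : K / X ≤ X * Y / X := Nat.div_le_div_right h
      rwa [Nat.mul_div_cancel_left _ hX] at h1
    rcases Nat.eq_zero_or_pos (K % X) with hR | hR
    · refine ⟨Y - K / X, 0, 0, X, K / X, by omega, by omega, by omega⟩
    · have hlt : K / X < Y := by
        rcases lt_or_ge (K / X) Y with h' | h'
        · exact h'
        · exfalso
          have h2 : X * Y ≤ X * (K / X) := Nat.mul_le_mul_left X h'
          omega
      refine ⟨Y - K / X - 1, K % X, 1, X - K % X, K / X, by omega, by omega, by omega⟩

lemma sign_nonneg (u z : ℤ) (h1 : 0 ≤ z * u) (h2 : |z| ≤ |u|) (hu : 0 ≤ u) : 0 ≤ z := by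
  by_contra hz
  push_neg at hz
  have h3 : z * u ≤ 0 := mul_nonpos_of_nonpos_of_nonneg hz.le hu
  have h4 : z * u = 0 := le_antisymm h3 h1
  rcases mul_eq_zero.mp h4 with h5 | h5
  · omega
  · rw [h5] at h2; simp at h2; omega

lemma sign_nonpos (u z : ℤ) (h1 : 0 ≤ z * u) (h2 : |z| ≤ |u|) (hu : u ≤ 0) : z ≤ 0 := by
  by_contra hz
  push_neg at hz
  have h3 : u * z ≤ 0 := mul_nonpos_of_nonpos_of_nonneg hu hz.le
  have h4 : z * u = 0 := le_antisymm (by linarith [mul_comm u z]) h1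
  rcases mul_eq_zero.mp h4 with h5 | h5
  · omega
  · rw [h5] at h2; simp at h2; omega

end Heis

open Heis in
/-- For every `g = c^z b^y a^x` one has `d(e, g) ≥ |x| + |y|`, with equality when
`zyx ≥ 0`, `max(x², y²) ≥ |z|` and `|xy| ≥ |z|` (Blachère's formula, case I.2.1). -/
theorem stmt15 (x y z : ℤ) :
    |x| + |y| ≤ (wdist 1 (c ^ z * b ^ y * a ^ x) : ℤ) ∧
    (0 ≤ z * y * x → |z| ≤ max (x ^ 2) (y ^ 2) → |z| ≤ |x * y| →
      (wdist 1 (c ^ z * b ^ y * a ^ x) : ℤ) = |x| + |y|) := by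
  rw [target_eq]
  set g : Heis := ⟨x, y, z⟩ with hg
  have hT : wdist 1 g =
      sInf {n | ∃ l : List Heis, (∀ s ∈ l, s ∈ S) ∧ l.length = n ∧ (1 : Heis) * l.prod = g} :=
    rfl
  set T : Set ℕ :=
    {n | ∃ l : List Heis, (∀ s ∈ l, s ∈ S) ∧ l.length = n ∧ (1 : Heis) * l.prod = g} with hTdef
  have hne : T.Nonempty := by
    obtain ⟨l, hl, hp⟩ := exists_word g
    exact ⟨l.length, l, hl, rfl, by rw [one_mul, hp]⟩
  have hlow : ∀ n ∈ T, |x| + |y| ≤ (n : ℤ) := by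
    rintro n ⟨l, hl, rfl, hp⟩
    rw [one_mul] at hp
    have := abs_prod_le l hl
    rw [hp] at this
    exact this
  have h1 : |x| + |y| ≤ (wdist 1 g : ℤ) := by
    rw [hT]
    exact hlow _ (Nat.sInf_mem hne)
  refine ⟨h1, fun hzyx _ hzxy => ?_⟩
  -- upper bound: construct a word of length |x| + |y|
  have hK : z.natAbs ≤ x.natAbs * y.natAbs := by
    have h2 : (z.natAbs : ℤ) ≤ ((x * y).natAbs : ℤ) := by
      rw [← Int.abs_eq_natAbs, ← Int.abs_eq_natAbs]
      exact hzxy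
    rw [Int.natAbs_mul] at h2
    exact_mod_cast h2
  obtain ⟨M, R, Q, V, W, hRV, hMQW, hKey⟩ := nat_decomp x.natAbs y.natAbs z.natAbs hK
  set sx : ℤ := if 0 ≤ x then 1 else -1 with hsx
  set sy : ℤ := if 0 ≤ y then 1 else -1 with hsy
  have hsxabs : sx.natAbs = 1 := by rw [hsx]; split <;> rfl
  have hsyabs : sy.natAbs = 1 := by rw [hsy]; split <;> rfl
  have hsxval : sx * (x.natAbs : ℤ) = x := by rw [hsx]; split <;> omega
  have hsyval : sy * (y.natAbs : ℤ) = y := by rw [hsy]; split <;> omega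
  have hsign : sx * sy * (z.natAbs : ℤ) = z := by
    have hu : 0 ≤ z * (x * y) := by nlinarith [hzyx]
    rcases le_or_gt 0 x with hx0 | hx0 <;> rcases le_or_gt 0 y with hy0 | hy0
    · have := sign_nonneg (x * y) z hu hzxy (mul_nonneg hx0 hy0)
      rw [hsx, hsy, if_pos hx0, if_pos hy0]; omega
    · have := sign_nonpos (x * y) z hu hzxy (mul_nonpos_of_nonneg_of_nonpos hx0 hy0.le)
      rw [hsx, hsy, if_pos hx0, if_neg (not_le.mpr hy0)]; omega
    · have := sign_nonpos (x * y) z hu hzxy (mul_nonpos_of_nonpos_of_nonneg hx0.le hy0)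
      rw [hsx, hsy, if_neg (not_le.mpr hx0), if_pos hy0]; omega
    · have := sign_nonneg (x * y) z hu hzxy (le_of_lt (mul_pos_of_neg_of_neg hx0 hy0))
      rw [hsx, hsy, if_neg (not_le.mpr hx0), if_neg (not_le.mpr hy0)]; omega
  -- the word
  set l : List Heis :=
    wb (sy * M) ++ wa (sx * R) ++ wb (sy * Q) ++ wa (sx * V) ++ wb (sy * W) with hl
  have hmem : ∀ s ∈ l, s ∈ S := by
    intro s hs
    rw [hl] at hs
    simp only [List.mem_append] at hs
    rcases hs with ((((hs | hs) | hs) | hs) | hs)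
    · exact wb_mem s hs
    · exact wa_mem s hs
    · exact wb_mem s hs
    · exact wa_mem s hs
    · exact wb_mem s hs
  have hlen : l.length = x.natAbs + y.natAbs := by
    rw [hl]
    simp only [List.length_append, wa, wb, List.length_replicate, Int.natAbs_mul,
      hsxabs, hsyabs, one_mul]
    omega
  have hprod : l.prod = g := by
    rw [hl]
    simp only [List.prod_append, prod_wa, prod_wb, mul_def, hg]
    have hxx : sx * (R : ℤ) + sx * (V : ℤ) = x := by
      have : ((R : ℤ) + V) = (x.natAbs : ℤ) := by exact_mod_cast hRV
      rw [← hsxval, ← this]; ring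
    have hyy : sy * (M : ℤ) + sy * (Q : ℤ) + sy * (W : ℤ) = y := by
      have : ((M : ℤ) + Q + W) = (y.natAbs : ℤ) := by exact_mod_cast hMQW
      rw [← hsyval, ← this]; ring
    have hzz : (sx * R) * (sy * Q) + (sx * R + sx * V) * (sy * W) = z := by
      have hcast : (R : ℤ) * Q + (x.natAbs : ℤ) * W = (z.natAbs : ℤ) := by
        exact_mod_cast hKey
      have hRVc : (R : ℤ) + V = (x.natAbs : ℤ) := by exact_mod_cast hRV
      calc (sx * R) * (sy * Q) + (sx * R + sx * V) * (sy * W)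
          = sx * sy * ((R : ℤ) * Q + ((R : ℤ) + V) * W) := by ring
        _ = sx * sy * ((R : ℤ) * Q + (x.natAbs : ℤ) * W) := by rw [hRVc]
        _ = sx * sy * (z.natAbs : ℤ) := by rw [hcast]
        _ = z := hsign
    simp only [mk.injEq]
    refine ⟨by linear_combination hxx, by linear_combination hyy, by linear_combination hzz⟩
  have hmemT : x.natAbs + y.natAbs ∈ T := ⟨l, hmem, hlen, by rw [one_mul, hprod]⟩
  have hle : wdist 1 g ≤ x.natAbs + y.natAbs := by
    rw [hT]
    exact Nat.sInf_le hmemT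
  have hle' : (wdist 1 g : ℤ) ≤ (x.natAbs : ℤ) + (y.natAbs : ℤ) := by exact_mod_cast hle
  have habs : |x| + |y| = (x.natAbs : ℤ) + (y.natAbs : ℤ) := by
    rw [Int.abs_eq_natAbs, Int.abs_eq_natAbs]
  linarith [h1]
end

section
/- In the discrete Heisenberg group H₃, for the sequence hₙ = (a^{ε_a} b^{ε_b})^n with ε_a, ε_b ∈ {±1}, and any fixed g = c^z b^y a^x, for all sufficiently large n one has d(g, hₙ) = |ε_b n − y| + |ε_a n − x|; consequently d(g, hₙ) − d(e, hₙ) → −ε_a x − ε_b y as n → ∞. -/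
namespace Heis

lemma a_zpow (m : ℤ) : a ^ m = ⟨m, 0, 0⟩ := by
  induction m using Int.induction_on with
  | zero => rw [zpow_zero, one_def]
  | succ k ih => rw [zpow_add_one, ih]; simp [mul_def, a]
  | pred k ih => rw [zpow_sub_one, ih]; simp [mul_def, inv_def, a]; push_cast; ring_nf

lemma b_zpow (m : ℤ) : b ^ m = ⟨0, m, 0⟩ := by
  induction m using Int.induction_on with
  | zero => rw [zpow_zero, one_def]
  | succ k ih => rw [zpow_add_one, ih]; simp [mul_def, b]
  | pred k ih => rw [zpow_sub_one, ih]; simp [mul_def, inv_def, b]; push_cast; ring_nf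

lemma c_zpow (m : ℤ) : c ^ m = ⟨0, 0, m⟩ := by
  induction m using Int.induction_on with
  | zero => rw [zpow_zero, one_def]
  | succ k ih => rw [zpow_add_one, ih]; simp [mul_def, c]
  | pred k ih => rw [zpow_sub_one, ih]; simp [mul_def, inv_def, c]; push_cast; ring_nf

def tri : ℕ → ℤ
  | 0 => 0
  | n+1 => tri n + (n+1)

lemma two_tri (n : ℕ) : 2 * tri n = n * (n + 1) := by
  induction n with
  | zero => rfl
  | succ k ih => rw [tri]; push_cast; push_cast at ih; ring_nf; ring_nf at ih; omega

lemma hn_eq (εa εb : ℤ) (n : ℕ) : (a ^ εa * b ^ εb) ^ n = ⟨n * εa, n * εb, εa * εb * tri n⟩ := by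
  induction n with
  | zero => rw [pow_zero, one_def]; simp [tri]
  | succ k ih =>
    rw [pow_succ, ih, a_zpow, b_zpow, mul_def, mul_def]
    simp only [mk.injEq, tri]
    push_cast
    refine ⟨by ring, by ring, by ring⟩


lemma gen_mem_a (εa : ℤ) (ha : εa = 1 ∨ εa = -1) : a ^ εa ∈ S := by
  rcases ha with h | h <;> subst h
  · rw [zpow_one]; exact Or.inl rfl
  · rw [zpow_neg_one]; exact Or.inr (Or.inr (Or.inl rfl))

lemma gen_mem_b (εb : ℤ) (hb : εb = 1 ∨ εb = -1) : b ^ εb ∈ S := by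
  rcases hb with h | h <;> subst h
  · rw [zpow_one]; exact Or.inr (Or.inl rfl)
  · rw [zpow_neg_one]; exact Or.inr (Or.inr (Or.inr rfl))

lemma gen_abs {s : Heis} (hs : s ∈ S) : s.x.natAbs + s.y.natAbs = 1 := by
  rcases hs with h | h | h | h <;> subst h <;> rfl

lemma prod_lower (l : List Heis) (h : ∀ s ∈ l, s ∈ S) :
    l.prod.x.natAbs + l.prod.y.natAbs ≤ l.length := by
  induction l with
  | nil => simp [one_def]
  | cons s t ih =>
    have hs := h s List.mem_cons_self
    have ht := ih (fun u hu => h u (List.mem_cons_of_mem s hu))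
    rw [List.prod_cons, List.length_cons, mul_def]
    have h1 : (s.x + t.prod.x).natAbs ≤ s.x.natAbs + t.prod.x.natAbs := Int.natAbs_add_le _ _
    have h2 : (s.y + t.prod.y).natAbs ≤ s.y.natAbs + t.prod.y.natAbs := Int.natAbs_add_le _ _
    have := gen_abs hs
    simp only
    omega


lemma word_exists (εa εb : ℤ) (ha : εa = 1 ∨ εa = -1) (hb : εb = 1 ∨ εb = -1) (w : Heis)
    (hA : 1 ≤ εa * w.x) (hB : 1 ≤ εb * w.y) (hT0 : 0 ≤ εa * εb * w.z)
    (hT1 : εa * εb * w.z < (εa * w.x) * (εb * w.y)) :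
    ∃ l : List Heis, (∀ s ∈ l, s ∈ S) ∧ (l.length : ℤ) = εa * w.x + εb * w.y ∧ l.prod = w := by
  obtain ⟨wx, wy, wz⟩ := w
  simp only at hA hB hT0 hT1 ⊢
  have ha2 : εa * εa = 1 := by rcases ha with h | h <;> subst h <;> norm_num
  have hb2 : εb * εb = 1 := by rcases hb with h | h <;> subst h <;> norm_num
  set A := εa * wx with hAdef
  set B := εb * wy with hBdef
  set T := εa * εb * wz with hTdef
  have hA0 : 0 < A := hA
  set q := T / A with hqdef
  set r := T % A with hrdef
  have hr0 : 0 ≤ r := Int.emod_nonneg T (ne_of_gt hA0)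
  have hrA : r < A := Int.emod_lt_of_pos T hA0
  have hdiv : A * q + r = T := Int.mul_ediv_add_emod T A
  have hq0 : 0 ≤ q := Int.ediv_nonneg hT0 hA0.le
  have hqB : q ≤ B - 1 := by
    by_contra hcon
    push_neg at hcon
    have : B ≤ q := by omega
    nlinarith
  refine ⟨List.replicate (B - 1 - q).toNat (b ^ εb) ++ List.replicate r.toNat (a ^ εa) ++
    [b ^ εb] ++ List.replicate (A - r).toNat (a ^ εa) ++ List.replicate q.toNat (b ^ εb),
    ?_, ?_, ?_⟩
  · intro s hs
    simp only [List.mem_append, List.mem_replicate, List.mem_singleton] at hs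
    rcases hs with ((((⟨_, h⟩ | ⟨_, h⟩) | h) | ⟨_, h⟩) | ⟨_, h⟩) <;> subst h
    · exact gen_mem_b εb hb
    · exact gen_mem_a εa ha
    · exact gen_mem_b εb hb
    · exact gen_mem_a εa ha
    · exact gen_mem_b εb hb
  · simp only [List.length_append, List.length_replicate, List.length_singleton]
    push_cast
    rw [Int.toNat_of_nonneg (by omega), Int.toNat_of_nonneg hr0,
      Int.toNat_of_nonneg (by omega), Int.toNat_of_nonneg hq0]
    ring
  · have hrep : ∀ (g : Heis) (m : ℤ) (k : ℕ), (List.replicate k (g ^ m)).prod = g ^ (m * k) :=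
      fun g m k => by rw [List.prod_replicate, ← zpow_natCast, ← zpow_mul]
    simp only [List.prod_append, hrep, List.prod_singleton]
    rw [a_zpow, b_zpow, a_zpow, b_zpow, b_zpow]
    rw [Int.toNat_of_nonneg (by omega), Int.toNat_of_nonneg hr0,
      Int.toNat_of_nonneg (by omega), Int.toNat_of_nonneg hq0]
    have hwx : wx = εa * A := by rw [hAdef]; rw [← mul_assoc, ha2, one_mul]
    have hwy : wy = εb * B := by rw [hBdef]; rw [← mul_assoc, hb2, one_mul]
    have hwz : wz = εa * εb * (A * q + r) := by
      rw [hdiv, hTdef]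
      calc wz = (εa * εa) * (εb * εb) * wz := by rw [ha2, hb2]; ring
      _ = εa * εb * (εa * εb * wz) := by ring
    simp only [mul_def, mk.injEq]
    refine ⟨by rw [hwx]; ring, by rw [hwy]; ring, by rw [hwz]; ring⟩


lemma wdist_eq (g w : Heis) (εa εb : ℤ) (ha : εa = 1 ∨ εa = -1) (hb : εb = 1 ∨ εb = -1)
    (hA : 1 ≤ εa * w.x) (hB : 1 ≤ εb * w.y) (hT0 : 0 ≤ εa * εb * w.z)
    (hT1 : εa * εb * w.z < (εa * w.x) * (εb * w.y)) :
    (wdist g (g * w) : ℤ) = εa * w.x + εb * w.y := by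
  obtain ⟨l, hl, hlen, hprod⟩ := word_exists εa εb ha hb w hA hB hT0 hT1
  have hmem : l.length ∈ {n | ∃ l' : List Heis, (∀ s ∈ l', s ∈ S) ∧ l'.length = n ∧
      g * l'.prod = g * w} := ⟨l, hl, rfl, by rw [hprod]⟩
  have hub : wdist g (g * w) ≤ l.length := Nat.sInf_le hmem
  have hne : {n | ∃ l' : List Heis, (∀ s ∈ l', s ∈ S) ∧ l'.length = n ∧
      g * l'.prod = g * w}.Nonempty := ⟨l.length, hmem⟩
  obtain ⟨l', hl', hlen', hprod'⟩ := Nat.sInf_mem hne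
  have hpw : l'.prod = w := mul_left_cancel hprod'
  have hlb : w.x.natAbs + w.y.natAbs ≤ wdist g (g * w) := by
    have h := prod_lower l' hl'
    rw [hpw] at h
    have hlen'' : l'.length = wdist g (g * w) := hlen'
    omega
  have habsx : (w.x.natAbs : ℤ) = εa * w.x := by
    rcases ha with h | h <;> subst h
    · rw [← Int.abs_eq_natAbs, one_mul]; exact abs_of_nonneg (by linarith)
    · rw [← Int.abs_eq_natAbs, neg_one_mul]; exact abs_of_nonpos (by linarith)
  have habsy : (w.y.natAbs : ℤ) = εb * w.y := by
    rcases hb with h | h <;> subst h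
    · rw [← Int.abs_eq_natAbs, one_mul]; exact abs_of_nonneg (by linarith)
    · rw [← Int.abs_eq_natAbs, neg_one_mul]; exact abs_of_nonpos (by linarith)
  have h1 : (wdist g (g * w) : ℤ) ≤ εa * w.x + εb * w.y := by
    rw [← hlen]; exact_mod_cast hub
  have h2 : εa * w.x + εb * w.y ≤ (wdist g (g * w) : ℤ) := by
    rw [← habsx, ← habsy]; exact_mod_cast hlb
  omega


set_option maxHeartbeats 2000000 in
lemma key (εa εb : ℤ) (ha : εa = 1 ∨ εa = -1) (hb : εb = 1 ∨ εb = -1) (x y z : ℤ) :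
    ∃ N : ℕ, ∀ n : ℕ, N ≤ n →
      (wdist ⟨x, y, z⟩ ((a ^ εa * b ^ εb) ^ n) : ℤ) = |εb * (n : ℤ) - y| + |εa * (n : ℤ) - x| := by
  have ha2 : εa * εa = 1 := by rcases ha with h | h <;> subst h <;> norm_num
  have hb2 : εb * εb = 1 := by rcases hb with h | h <;> subst h <;> norm_num
  have haa : |εa| = 1 := by rcases ha with h | h <;> simp [h]
  have hbb : |εb| = 1 := by rcases hb with h | h <;> simp [h]
  refine ⟨4 * (x.natAbs + y.natAbs + z.natAbs + 2)^2, fun n hn => ?_⟩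
  have hnZ : 4 * (|x| + |y| + |z| + 2)^2 ≤ (n : ℤ) := by
    rw [Int.abs_eq_natAbs, Int.abs_eq_natAbs, Int.abs_eq_natAbs]
    exact_mod_cast hn
  have hn0 : (0:ℤ) ≤ (n:ℤ) := Int.natCast_nonneg n
  have hn1 : (1:ℤ) ≤ (n:ℤ) := by nlinarith [abs_nonneg x, abs_nonneg y, abs_nonneg z]
  have ht := two_tri n
  have hpb : |εa * x| = |x| := by rw [abs_mul, haa, one_mul]
  have hsb : |εb * y| = |y| := by rw [abs_mul, hbb, one_mul]
  have hub : |εa * εb * z| = |z| := by rw [abs_mul, abs_mul, haa, hbb, one_mul, one_mul]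
  have hpn : (εa*x)*(n:ℤ) ≤ |x| * (n:ℤ) := by
    have := le_abs_self (εa*x); nlinarith
  have hsn : (εb*y)*(n:ℤ) ≤ |y| * (n:ℤ) := by
    have := le_abs_self (εb*y); nlinarith
  have hsn' : -(|y| * (n:ℤ)) ≤ (εb*y)*(n:ℤ) := by
    have := neg_abs_le (εb*y); nlinarith
  have hps : -(|x| * |y|) ≤ (εa*x)*(εb*y) := by
    have h1 : |(εa*x)*(εb*y)| = |x| * |y| := by rw [abs_mul, hpb, hsb]
    have := neg_abs_le ((εa*x)*(εb*y)); linarith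
  have hnn : 4*(|x| + |y| + |z| + 2)^2*(n:ℤ) ≤ (n:ℤ)*(n:ℤ) :=
    mul_le_mul_of_nonneg_right hnZ hn0
  have hxb := le_abs_self x
  have hub1 := le_abs_self (εa*εb*z)
  have hub2 := neg_abs_le (εa*εb*z)
  rw [hub] at hub1 hub2
  -- the four hypotheses in linear form
  have hQ1 : |x| + 1 ≤ 4 * (|x| + |y| + |z| + 2)^2 := by
    nlinarith [abs_nonneg x, abs_nonneg y, abs_nonneg z]
  have hQ2 : |y| + 1 ≤ 4 * (|x| + |y| + |z| + 2)^2 := by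
    nlinarith [abs_nonneg x, abs_nonneg y, abs_nonneg z]
  have hAlin : (1:ℤ) ≤ (n:ℤ) - εa*x := by
    have := le_abs_self (εa*x); rw [hpb] at this; linarith
  have hBlin : (1:ℤ) ≤ (n:ℤ) - εb*y := by
    have := le_abs_self (εb*y); rw [hsb] at this; linarith
  have hf1 : (0:ℤ) ≤ ((n:ℤ) - 1) * (4*(|x| + |y| + |z| + 2)^2 - 2 * |x|) := by
    refine mul_nonneg (by linarith) ?_
    nlinarith [abs_nonneg x, abs_nonneg y, abs_nonneg z]
  have hsq1 : 2 * |x| * |y| + 2 * |z| + 2 * |x| ≤ 4 * (|x| + |y| + |z| + 2)^2 := by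
    nlinarith [abs_nonneg x, abs_nonneg y, abs_nonneg z, mul_nonneg (abs_nonneg x) (abs_nonneg y),
      mul_nonneg (abs_nonneg x) (abs_nonneg z), mul_nonneg (abs_nonneg y) (abs_nonneg z)]
  have hT0lin : (0:ℤ) ≤ tri n - εa*εb*z - (εa*x)*(n:ℤ) + (εa*x)*(εb*y) := by
    nlinarith [hf1, hsq1, hnn, hpn, hps, hub1, ht, hn1]
  have hf2 : (0:ℤ) ≤ ((n:ℤ) - 1) * (4*(|x| + |y| + |z| + 2)^2 - 2 * |y| - 1) := by
    refine mul_nonneg (by linarith) ?_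
    nlinarith [abs_nonneg x, abs_nonneg y, abs_nonneg z]
  have hsq2 : 2 * |z| + 2 * |y| + 2 ≤ 4 * (|x| + |y| + |z| + 2)^2 := by
    nlinarith [abs_nonneg x, abs_nonneg y, abs_nonneg z]
  have hT1lin : tri n - εa*εb*z - (εa*x)*(n:ℤ) + (εa*x)*(εb*y)
      < ((n:ℤ) - εa*x)*((n:ℤ) - εb*y) := by
    nlinarith [hf2, hsq2, hnn, hsn, hub2, ht, hn1, hps, hpn]
  -- the element W = g⁻¹ hₙ
  have hgW : (⟨x, y, z⟩ : Heis) * ⟨(n:ℤ)*εa - x, (n:ℤ)*εb - y,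
      εa*εb*tri n - z - x*((n:ℤ)*εb - y)⟩ = (a ^ εa * b ^ εb) ^ n := by
    rw [hn_eq, mul_def]
    simp only [mk.injEq]
    refine ⟨by ring, by ring, by ring⟩
  have hA : (1:ℤ) ≤ εa * ((n:ℤ)*εa - x) := by
    have e : εa * ((n:ℤ)*εa - x) = (n:ℤ) - εa*x := by linear_combination (n:ℤ) * ha2
    rw [e]; exact hAlin
  have hB : (1:ℤ) ≤ εb * ((n:ℤ)*εb - y) := by
    have e : εb * ((n:ℤ)*εb - y) = (n:ℤ) - εb*y := by linear_combination (n:ℤ) * hb2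
    rw [e]; exact hBlin
  have eT : εa*εb*(εa*εb*tri n - z - x*((n:ℤ)*εb - y))
      = tri n - εa*εb*z - (εa*x)*(n:ℤ) + (εa*x)*(εb*y) := by
    linear_combination (tri n * (εb*εb)) * ha2 + (x*y*(εa*εa) - εa*x*(n:ℤ)) * hb2 + (tri n - εa*εa*x*y) * hb2
  have hT0 : (0:ℤ) ≤ εa*εb*(εa*εb*tri n - z - x*((n:ℤ)*εb - y)) := by rw [eT]; exact hT0lin
  have hT1 : εa*εb*(εa*εb*tri n - z - x*((n:ℤ)*εb - y))
      < (εa * ((n:ℤ)*εa - x)) * (εb * ((n:ℤ)*εb - y)) := by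
    rw [eT]
    have e1 : εa * ((n:ℤ)*εa - x) = (n:ℤ) - εa*x := by linear_combination (n:ℤ) * ha2
    have e2 : εb * ((n:ℤ)*εb - y) = (n:ℤ) - εb*y := by linear_combination (n:ℤ) * hb2
    rw [e1, e2]; exact hT1lin
  have hmain := wdist_eq ⟨x, y, z⟩ ⟨(n:ℤ)*εa - x, (n:ℤ)*εb - y,
      εa*εb*tri n - z - x*((n:ℤ)*εb - y)⟩ εa εb ha hb hA hB hT0 hT1
  rw [hgW] at hmain
  rw [hmain]
  have e1 : εa * ((n:ℤ)*εa - x) = (n:ℤ) - εa*x := by linear_combination (n:ℤ) * ha2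
  have e2 : εb * ((n:ℤ)*εb - y) = (n:ℤ) - εb*y := by linear_combination (n:ℤ) * hb2
  have h5 : |εb * (n:ℤ) - y| = (n:ℤ) - εb*y := by
    have e : εb*(n:ℤ) - y = εb*((n:ℤ) - εb*y) := by linear_combination y * hb2
    rw [e, abs_mul, hbb, one_mul, abs_of_nonneg (by linarith)]
  have h6 : |εa * (n:ℤ) - x| = (n:ℤ) - εa*x := by
    have e : εa*(n:ℤ) - x = εa*((n:ℤ) - εa*x) := by linear_combination x * ha2
    rw [e, abs_mul, haa, one_mul, abs_of_nonneg (by linarith)]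
  rw [h5, h6]
  show εa * ((n:ℤ)*εa - x) + εb * ((n:ℤ)*εb - y) = _
  rw [e1, e2]
  ring


end Heis

open Heis in
/-- For `hₙ = (a^{ε_a} b^{ε_b})^n` with `ε_a, ε_b = ±1` and any fixed `g = c^z b^y a^x`,
for all sufficiently large `n` one has `d(g, hₙ) = |ε_b n − y| + |ε_a n − x|`; consequently
`d(g, hₙ) − d(e, hₙ) → −ε_a x − ε_b y` as `n → ∞`. -/
theorem stmt16 (εa εb : ℤ) (ha : εa = 1 ∨ εa = -1) (hb : εb = 1 ∨ εb = -1)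
    (x y z : ℤ) :
    (∃ N : ℕ, ∀ n : ℕ, N ≤ n →
      (wdist (c ^ z * b ^ y * a ^ x) ((a ^ εa * b ^ εb) ^ n) : ℤ)
        = |εb * (n : ℤ) - y| + |εa * (n : ℤ) - x|) ∧
    Filter.Tendsto
      (fun n : ℕ =>
        (wdist (c ^ z * b ^ y * a ^ x) ((a ^ εa * b ^ εb) ^ n) : ℝ)
          - (wdist 1 ((a ^ εa * b ^ εb) ^ n) : ℝ))
      Filter.atTop (nhds ((-εa * x - εb * y : ℤ) : ℝ)) := by
  have ha2 : εa * εa = 1 := by rcases ha with h | h <;> subst h <;> norm_num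
  have hb2 : εb * εb = 1 := by rcases hb with h | h <;> subst h <;> norm_num
  have haa : |εa| = 1 := by rcases ha with h | h <;> simp [h]
  have hbb : |εb| = 1 := by rcases hb with h | h <;> simp [h]
  have hg : c ^ z * b ^ y * a ^ x = (⟨x, y, z⟩ : Heis) := by
    rw [a_zpow, b_zpow, c_zpow, mul_def, mul_def]
    simp only [mk.injEq]
    refine ⟨by ring, by ring, by ring⟩
  obtain ⟨N1, h1⟩ := key εa εb ha hb x y z
  obtain ⟨N2, h2⟩ := key εa εb ha hb 0 0 0
  constructor
  · exact ⟨N1, fun n hn => by rw [hg]; exact h1 n hn⟩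
  · set N := N1 + N2 + (x.natAbs + y.natAbs + 1) with hN
    have hev : (fun _ : ℕ => ((-εa * x - εb * y : ℤ) : ℝ)) =ᶠ[Filter.atTop]
        (fun n : ℕ =>
          (wdist (c ^ z * b ^ y * a ^ x) ((a ^ εa * b ^ εb) ^ n) : ℝ)
            - (wdist 1 ((a ^ εa * b ^ εb) ^ n) : ℝ)) := by
      rw [Filter.EventuallyEq, Filter.eventually_atTop]
      refine ⟨N, fun n hn => ?_⟩
      have hnx : (x.natAbs : ℤ) + (y.natAbs : ℤ) + 1 ≤ (n : ℤ) := by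
        have : x.natAbs + y.natAbs + 1 ≤ n := by omega
        exact_mod_cast this
      rw [← Int.abs_eq_natAbs, ← Int.abs_eq_natAbs] at hnx
      have hax := le_abs_self x
      have hay := le_abs_self y
      have haxn := neg_abs_le x
      have hayn := neg_abs_le y
      have e1 := h1 n (by omega)
      have e2 := h2 n (by omega)
      have h5 : |εb * (n:ℤ) - y| = (n:ℤ) - εb*y := by
        have e : εb*(n:ℤ) - y = εb*((n:ℤ) - εb*y) := by linear_combination y * hb2
        have hby : εb*y ≤ |y| := by
          have := le_abs_self (εb*y)
          rw [abs_mul, hbb, one_mul] at this; exact this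
        rw [e, abs_mul, hbb, one_mul, abs_of_nonneg (by linarith)]
      have h6 : |εa * (n:ℤ) - x| = (n:ℤ) - εa*x := by
        have e : εa*(n:ℤ) - x = εa*((n:ℤ) - εa*x) := by linear_combination x * ha2
        have hbx : εa*x ≤ |x| := by
          have := le_abs_self (εa*x)
          rw [abs_mul, haa, one_mul] at this; exact this
        rw [e, abs_mul, haa, one_mul, abs_of_nonneg (by linarith)]
      have h7 : |εb * (n:ℤ) - 0| = (n:ℤ) := by
        rw [sub_zero, abs_mul, hbb, one_mul, abs_of_nonneg (by positivity)]
      have h8 : |εa * (n:ℤ) - 0| = (n:ℤ) := by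
        rw [sub_zero, abs_mul, haa, one_mul, abs_of_nonneg (by positivity)]
      rw [h5, h6] at e1
      rw [h7, h8] at e2
      have e3 : (wdist (⟨x,y,z⟩ : Heis) ((a^εa*b^εb)^n) : ℤ)
          - (wdist (⟨0,0,0⟩ : Heis) ((a^εa*b^εb)^n) : ℤ) = -εa*x - εb*y := by
        rw [e1, e2]; ring
      rw [hg, one_def]
      have := congrArg (fun t : ℤ => (t : ℝ)) e3
      push_cast at this ⊢
      linarith
    exact Filter.Tendsto.congr' hev tendsto_const_nhds
end
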